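/- Let τ: Λ → M_n(B) be an injective algebra homomorphism from a k-algebra Λ with orthogonal idempotents e_i to a matrix ring over B = k[x_1,…,x_s], with τ(e_i) = e_{ii} and each arrow generator mapped to a nonzero monomial times a matrix unit. For each maximal ideal 𝔟 of B not containing the monomial σ = x_1⋯x_s (i.e., all coordinates nonzero), the composition Λ → M_n(B) → M_n(B/𝔟) ≅ M_n(k) is surjective, provided the quiver Q has a cycle passing through every vertex. -/

import Mathlib

lemma map_stdBasisMatrix_aux {n : ℕ} {R S : Type*} [Semiring R] [Semiring S] (f : R → S)
    (h0 : f 0 = 0) (i j : Fin n) (r : R) :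
    (Matrix.single i j r).map f = Matrix.single i j (f r) := by
  ext a b
  simp [Matrix.single, Matrix.map_apply, apply_ite f, h0]


/-- Let τ : Λ → M_n(B) be an injective algebra homomorphism over
B = k[x_1,…,x_s], k algebraically closed, with τ(e_i) = e_{ii} and each arrow
sent to a nonzero monomial times a matrix unit. For each point v with all
coordinates nonzero (i.e., each maximal ideal of B not containing σ = x_1⋯x_s),
the composition Λ → M_n(B) → M_n(k) is surjective, provided the quiver is
strongly connected (it has a cycle passing through every vertex). -/
theorem stmt_14 {k : Type} [Field k] [IsAlgClosed k] {n s : ℕ}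
    {Λ I : Type} [Ring Λ] [Algebra k Λ]
    (τ : Λ →ₐ[k] Matrix (Fin n) (Fin n) (MvPolynomial (Fin s) k))
    (hinj : Function.Injective τ)
    (e : Fin n → Λ) (ar : I → Λ) (hd tl : I → Fin n)
    (d : I → (Fin s →₀ ℕ)) (c : I → k)
    (he : ∀ i, τ (e i) = Matrix.single i i 1)
    (har : ∀ a, τ (ar a) =
      Matrix.single (hd a) (tl a) (MvPolynomial.monomial (d a) (c a)))
    (hc : ∀ a, c a ≠ 0)
    (hgen : Algebra.adjoin k (Set.range e ∪ Set.range ar) = ⊤)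
    (hconn : ∀ i j : Fin n,
      Relation.ReflTransGen (fun u v => ∃ a, tl a = u ∧ hd a = v) i j)
    (v : Fin s → k) (hv : ∀ t, v t ≠ 0) :
    Function.Surjective
      (fun x : Λ => (τ x).map (MvPolynomial.eval v)) := by
  -- the composed algebra homomorphism
  set φ : Λ →ₐ[k] Matrix (Fin n) (Fin n) k :=
    ((MvPolynomial.aeval v : MvPolynomial (Fin s) k →ₐ[k] k).mapMatrix).comp τ with hφ
  have hcoe : ⇑(MvPolynomial.aeval v : MvPolynomial (Fin s) k →ₐ[k] k)
      = ⇑(MvPolynomial.eval v) := by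
    rw [← MvPolynomial.coe_aeval_eq_eval]; rfl
  have hφeq : ∀ x : Λ, (τ x).map (MvPolynomial.eval v) = φ x := by
    intro x
    show _ = (τ x).map (MvPolynomial.aeval v)
    rw [hcoe]
  -- matrix units in the range
  have hEdiag : ∀ i : Fin n, Matrix.single i i (1:k) ∈ φ.range := by
    intro i
    refine ⟨e i, ?_⟩
    show ((τ (e i)).map (MvPolynomial.aeval v) : Matrix (Fin n) (Fin n) k) = _
    rw [he i, map_stdBasisMatrix_aux _ (map_zero _)]
    simp
  have hEar : ∀ a : I, Matrix.single (hd a) (tl a) (1:k) ∈ φ.range := by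
    intro a
    have hval : (MvPolynomial.aeval v) (MvPolynomial.monomial (d a) (c a))
        = c a * ∏ t ∈ (d a).support, v t ^ (d a) t := by
      simp [MvPolynomial.aeval_monomial, Finsupp.prod]
    set r : k := c a * ∏ t ∈ (d a).support, v t ^ (d a) t with hr
    have hrne : r ≠ 0 := by
      apply mul_ne_zero (hc a)
      exact Finset.prod_ne_zero_iff.2 fun t _ => pow_ne_zero _ (hv t)
    have hmem : Matrix.single (hd a) (tl a) r ∈ φ.range := by
      refine ⟨ar a, ?_⟩
      show ((τ (ar a)).map (MvPolynomial.aeval v) : Matrix (Fin n) (Fin n) k) = _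
      rw [har a, map_stdBasisMatrix_aux _ (map_zero _), hval]
    have : Matrix.single (hd a) (tl a) (1:k)
        = r⁻¹ • Matrix.single (hd a) (tl a) r := by
      rw [Matrix.smul_single, smul_eq_mul, inv_mul_cancel₀ hrne]
    rw [this]
    exact Subalgebra.smul_mem _ hmem _
  -- all matrix units via strong connectivity
  have hE : ∀ i j : Fin n, Matrix.single j i (1:k) ∈ φ.range := by
    intro i j
    induction hconn i j with
    | refl => exact hEdiag i
    | tail _ hstep ih =>
        obtain ⟨a, hta, hha⟩ := hstep
        have := Subalgebra.mul_mem _ (hha ▸ hta ▸ hEar a) ih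
        rwa [Matrix.single_mul_single_same, one_mul] at this
  -- range is everything
  have htop : φ.range = ⊤ := by
    rw [eq_top_iff]
    intro M _
    rw [Matrix.matrix_eq_sum_single M]
    apply Subalgebra.sum_mem
    intro i _
    apply Subalgebra.sum_mem
    intro j _
    have : Matrix.single i j (M i j) = M i j • Matrix.single i j (1:k) := by
      rw [Matrix.smul_single, smul_eq_mul, mul_one]
    rw [this]
    exact Subalgebra.smul_mem _ (hE j i) _
  intro M
  obtain ⟨x, hx⟩ : M ∈ φ.range := htop ▸ Algebra.mem_top
  exact ⟨x, (hφeq x).trans hx⟩
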